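/- Let φ be a flow on a compact metric space M and let p ∈ M. Suppose that for every x ∈ M, lim_{δ→0} liminf_{t→+∞} (1/t)∫₀ᵗ χ_{B(p,δ)}(φ_s(x)) ds = 1, where B(p,δ) is the open ball of radius δ around p and χ_A denotes the indicator function of a set A. Then every φ-invariant Borel probability measure on M equals the Dirac measure δ_p; in particular δ_p is the unique φ-invariant ergodic Borel probability measure. -/

import Mathlib

open MeasureTheory

/-- Let `φ` be a flow on a compact metric space `M` and `p ∈ M`.  If for
every `x ∈ M` we have `lim_{δ→0⁺} liminf_{t→∞} (1/t)∫₀ᵗ χ_{B(p,δ)}(φ_s x) ds = 1`, then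
every `φ`-invariant Borel probability measure equals the Dirac measure at `p`; in
particular `δ_p` is the unique `φ`-invariant ergodic Borel probability measure. -/
theorem invariant_measure_eq_dirac_of_attracting_point
    {M : Type*} [MetricSpace M] [CompactSpace M] [MeasurableSpace M] [BorelSpace M]
    (φ : ℝ → M → M)
    (hcont : Continuous fun q : M × ℝ => φ q.2 q.1)
    (h0 : ∀ x, φ 0 x = x)
    (hadd : ∀ s t : ℝ, ∀ x, φ t (φ s x) = φ (s + t) x)
    (p : M)
    (hattract : ∀ x : M,
      Filter.Tendsto
        (fun δ : ℝ => Filter.liminf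
          (fun t : ℝ => (1 / t) *
            ∫ s in (0 : ℝ)..t, (Metric.ball p δ).indicator (fun _ => (1 : ℝ)) (φ s x))
          Filter.atTop)
        (nhdsWithin 0 (Set.Ioi 0)) (nhds 1)) :
    ∀ μ : Measure M, IsProbabilityMeasure μ →
      (∀ t : ℝ, MeasurePreserving (φ t) μ μ) →
      μ = Measure.dirac p := by
  intro μ hprob hinv
  set f : ℝ → M → ℝ := fun δ => (Metric.ball p δ).indicator (fun _ => (1 : ℝ)) with hf
  set A : ℝ → M → ℝ → ℝ := fun δ x t => (1 / t) * ∫ s in (0 : ℝ)..t, f δ (φ s x) with hA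
  -- basic facts about f
  have hfmeas : ∀ δ, Measurable (f δ) := fun δ =>
    measurable_const.indicator Metric.isOpen_ball.measurableSet
  have hf_nonneg : ∀ δ y, 0 ≤ f δ y := by
    intro δ y
    exact Set.indicator_nonneg (fun _ _ => zero_le_one) y
  have hf_le_one : ∀ δ y, f δ y ≤ 1 := by
    intro δ y
    by_cases h : y ∈ Metric.ball p δ
    · simp [hf, Set.indicator_of_mem h]
    · simp [hf, Set.indicator_of_notMem h]
  have hφx : ∀ x : M, Continuous fun s : ℝ => φ s x := fun x =>
    hcont.comp (continuous_const.prodMk continuous_id)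
  have hφs : ∀ s : ℝ, Continuous fun x : M => φ s x := fun s =>
    hcont.comp (continuous_id.prodMk continuous_const)
  -- interval integrability
  have hint : ∀ δ x (t : ℝ), IntervalIntegrable (fun s => f δ (φ s x)) volume 0 t := by
    intro δ x t
    rw [intervalIntegrable_iff]
    refine Integrable.mono' (g := fun _ => (1 : ℝ)) ?_
      ((hfmeas δ).comp (hφx x).measurable).aestronglyMeasurable ?_
    · refine (integrableOn_const_iff (by simp)).2 (Or.inr ?_)
      rw [Set.uIoc]; exact measure_Ioc_lt_top
    filter_upwards with s
    rw [Real.norm_eq_abs, abs_of_nonneg (hf_nonneg δ _)]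
    exact hf_le_one δ _
  -- A is in [0,1] for t ≥ 1
  have hA_nonneg : ∀ δ x, ∀ t : ℝ, 1 ≤ t → 0 ≤ A δ x t := by
    intro δ x t ht
    apply mul_nonneg (by positivity)
    exact intervalIntegral.integral_nonneg (by linarith) fun s _ => hf_nonneg δ _
  have hA_le_one : ∀ δ x, ∀ t : ℝ, 1 ≤ t → A δ x t ≤ 1 := by
    intro δ x t ht
    have ht0 : (0 : ℝ) < t := by linarith
    have h1 : ∫ s in (0 : ℝ)..t, f δ (φ s x) ≤ ∫ s in (0 : ℝ)..t, (1 : ℝ) :=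
      intervalIntegral.integral_mono_on (le_of_lt ht0) (hint δ x t)
        intervalIntegrable_const fun s _ => hf_le_one δ _
    have h2 : ∫ s in (0 : ℝ)..t, (1 : ℝ) = t := by simp
    calc A δ x t ≤ (1 / t) * ∫ s in (0 : ℝ)..t, (1 : ℝ) :=
          mul_le_mul_of_nonneg_left h1 (by positivity)
      _ = (1 / t) * t := by rw [h2]
      _ = 1 := by field_simp
  -- monotonicity in δ
  have hmono : ∀ (δ' δ : ℝ), δ' ≤ δ → ∀ x, ∀ t : ℝ, 1 ≤ t → A δ' x t ≤ A δ x t := by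
    intro δ' δ hle x t ht
    apply mul_le_mul_of_nonneg_left _ (by positivity)
    apply intervalIntegral.integral_mono_on (by linarith) (hint δ' x t) (hint δ x t)
    intro s _
    exact Set.indicator_le_indicator_of_subset (Metric.ball_subset_ball hle)
      (fun _ => zero_le_one) _
  -- liminf at a fixed δ is ≥ 1
  have hbdd : ∀ δ x, Filter.IsBoundedUnder (· ≤ ·) Filter.atTop (A δ x) :=
    fun δ x => ⟨1, Filter.eventually_map.2 <|
      (Filter.eventually_ge_atTop 1).mono fun t ht => hA_le_one δ x t ht⟩
  have hbdd' : ∀ δ x, Filter.IsBoundedUnder (· ≥ ·) Filter.atTop (A δ x) :=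
    fun δ x => ⟨0, Filter.eventually_map.2 <|
      (Filter.eventually_ge_atTop 1).mono fun t ht => hA_nonneg δ x t ht⟩
  have hliminf : ∀ x, ∀ δ : ℝ, 0 < δ → 1 ≤ Filter.liminf (A δ x) Filter.atTop := by
    intro x δ hδ
    by_contra hlt
    push_neg at hlt
    obtain ⟨ε, hε, hεlt⟩ : ∃ ε > 0, Filter.liminf (A δ x) Filter.atTop < 1 - ε := by
      refine ⟨(1 - Filter.liminf (A δ x) Filter.atTop) / 2, by linarith, by linarith⟩
    have h1 : ∀ᶠ δ' in nhdsWithin 0 (Set.Ioi 0),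
        1 - ε < Filter.liminf (A δ' x) Filter.atTop :=
      (hattract x).eventually (eventually_gt_nhds (by linarith))
    have h2 : Set.Ioo (0 : ℝ) δ ∈ nhdsWithin 0 (Set.Ioi 0) :=
      Ioo_mem_nhdsGT_of_mem ⟨le_refl 0, hδ⟩
    obtain ⟨δ', hδ'1, hδ'2⟩ := (h1.and (Filter.eventually_of_mem h2 fun y hy => hy)).exists
    have hle : Filter.liminf (A δ' x) Filter.atTop ≤ Filter.liminf (A δ x) Filter.atTop := by
      apply Filter.liminf_le_liminf
      · exact (Filter.eventually_ge_atTop 1).mono fun t ht =>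
          hmono δ' δ (le_of_lt hδ'2.2) x t ht
      · exact hbdd' δ' x
      · exact (hbdd δ x).isCoboundedUnder_ge
    linarith
  -- pointwise convergence A δ x t → 1
  have htend : ∀ x, ∀ δ : ℝ, 0 < δ →
      Filter.Tendsto (A δ x) Filter.atTop (nhds 1) := by
    intro x δ hδ
    refine tendsto_of_le_liminf_of_limsup_le (hliminf x δ hδ)
      (Filter.limsup_le_of_le ((hbdd' δ x).isCoboundedUnder_le)
        ((Filter.eventually_ge_atTop 1).mono fun t ht => hA_le_one δ x t ht))
      (hbdd δ x) (hbdd' δ x)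
  -- the key integral identity
  have hFint : ∀ δ, ∀ t : ℝ, 0 < t →
      Integrable (Function.uncurry fun (x : M) (s : ℝ) => f δ (φ s x))
        (μ.prod (volume.restrict (Set.Ioc 0 t))) := by
    intro δ t ht
    refine Integrable.mono' (integrable_const (1 : ℝ)) ?_ ?_
    · exact ((hfmeas δ).comp (hcont.measurable)).aestronglyMeasurable
    · filter_upwards with z
      rcases z with ⟨x, s⟩
      simp only [Function.uncurry_apply_pair]
      rw [Real.norm_eq_abs, abs_of_nonneg (hf_nonneg δ _)]
      exact hf_le_one δ _
  have hkey : ∀ δ : ℝ, ∀ t : ℝ, 0 < t →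
      ∫ x, A δ x t ∂μ = (μ (Metric.ball p δ)).toReal := by
    intro δ t ht
    have hinner : ∀ s : ℝ, ∫ x, f δ (φ s x) ∂μ = (μ (Metric.ball p δ)).toReal := by
      intro s
      have h1 : ∫ y, f δ y ∂(Measure.map (φ s) μ) = ∫ x, f δ (φ s x) ∂μ :=
        integral_map (hφs s).measurable.aemeasurable (hfmeas δ).aestronglyMeasurable
      rw [(hinv s).map_eq] at h1
      rw [← h1, hf]
      rw [integral_indicator_const (1 : ℝ) Metric.isOpen_ball.measurableSet]
      simp [measureReal_def]
    calc ∫ x, A δ x t ∂μ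
        = (1 / t) * ∫ x, (∫ s in (0:ℝ)..t, f δ (φ s x)) ∂μ := by
          simp only [hA]
          exact integral_const_mul _ _
      _ = (1 / t) * ∫ x, (∫ s in Set.Ioc (0:ℝ) t, f δ (φ s x)) ∂μ := by
          congr 1
          apply integral_congr_ae
          filter_upwards with x
          rw [intervalIntegral.integral_of_le (le_of_lt ht)]
      _ = (1 / t) * ∫ s in Set.Ioc (0:ℝ) t, (∫ x, f δ (φ s x) ∂μ) := by
          congr 1
          exact integral_integral_swap (hFint δ t ht)
      _ = (1 / t) * ∫ s in Set.Ioc (0:ℝ) t, (μ (Metric.ball p δ)).toReal := by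
          congr 1
          exact integral_congr_ae (Filter.Eventually.of_forall fun s => hinner s)
      _ = (μ (Metric.ball p δ)).toReal := by
          rw [setIntegral_const]
          simp only [measureReal_def, Real.volume_Ioc, sub_zero, ENNReal.toReal_ofReal (le_of_lt ht),
            smul_eq_mul]
          field_simp
  -- measurability of x ↦ A δ x t
  have hAmeas : ∀ δ : ℝ, ∀ t : ℝ, 0 < t →
      AEStronglyMeasurable (fun x => A δ x t) μ := by
    intro δ t ht
    have h1 := (hFint δ t ht).integral_prod_left
    have h2 : (fun x => A δ x t) =
        fun x => (1 / t) * ∫ s in Set.Ioc (0:ℝ) t, f δ (φ s x) := by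
      funext x
      rw [hA]
      simp only
      rw [intervalIntegral.integral_of_le (le_of_lt ht)]
    rw [h2]
    exact (h1.const_mul (1 / t)).aestronglyMeasurable
  -- conclude μ (ball p δ) = 1
  have hball : ∀ δ : ℝ, 0 < δ → μ (Metric.ball p δ) = 1 := by
    intro δ hδ
    have hdct : Filter.Tendsto (fun t : ℝ => ∫ x, A δ x t ∂μ) Filter.atTop
        (nhds (∫ _x, (1 : ℝ) ∂μ)) := by
      apply tendsto_integral_filter_of_dominated_convergence (fun _ => (1 : ℝ))
      · exact (Filter.eventually_gt_atTop 0).mono fun t ht => hAmeas δ t ht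
      · refine (Filter.eventually_ge_atTop 1).mono fun t ht => ?_
        filter_upwards with x
        rw [Real.norm_eq_abs, abs_of_nonneg (hA_nonneg δ x t ht)]
        exact hA_le_one δ x t ht
      · exact integrable_const 1
      · exact Filter.Eventually.of_forall fun x => htend x δ hδ
    have hconst : Filter.Tendsto (fun t : ℝ => ∫ x, A δ x t ∂μ) Filter.atTop
        (nhds ((μ (Metric.ball p δ)).toReal)) := by
      apply Filter.Tendsto.congr' _ tendsto_const_nhds
      exact (Filter.eventually_gt_atTop 0).mono fun t ht => (hkey δ t ht).symm
    have h1 : (∫ _x, (1 : ℝ) ∂μ) = 1 := by simp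
    have := tendsto_nhds_unique hconst hdct
    rw [h1] at this
    rwa [ENNReal.toReal_eq_one_iff] at this
  -- μ {p}ᶜ = 0
  have hcompl : μ ({p}ᶜ) = 0 := by
    have hsub : ({p}ᶜ : Set M) ⊆ ⋃ n : ℕ, (Metric.ball p (1 / (n + 1)))ᶜ := by
      intro x hx
      have hd : 0 < dist x p := dist_pos.2 hx
      obtain ⟨n, hn⟩ := exists_nat_one_div_lt hd
      exact Set.mem_iUnion.2 ⟨n, fun hmem => absurd (Metric.mem_ball.1 hmem)
        (not_lt.2 (le_of_lt hn))⟩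
    refine le_antisymm (le_trans (measure_mono hsub) (le_of_eq (measure_iUnion_null ?_)))
      zero_le
    intro n
    have hb : μ (Metric.ball p (1 / (n + 1))) = 1 := hball _ (by positivity)
    have := measure_add_measure_compl
      (μ := μ) (Metric.isOpen_ball (x := p) (ε := 1 / (n + 1))).measurableSet
    rw [hb, measure_univ] at this
    exact (ENNReal.add_right_inj ENNReal.one_ne_top).1
      (this.trans (add_zero (1 : ENNReal)).symm)
  have hp : μ {p} = 1 := by
    have := measure_add_measure_compl (μ := μ) (measurableSet_singleton p)
    rw [hcompl, add_zero, measure_univ] at this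
    exact this
  -- finish
  apply Measure.ext
  intro s hs
  rw [Measure.dirac_apply' _ hs]
  by_cases hps : p ∈ s
  · rw [Set.indicator_of_mem hps]
    refine le_antisymm prob_le_one ?_
    calc (1 : ENNReal) = μ {p} := hp.symm
      _ ≤ μ s := measure_mono (Set.singleton_subset_iff.2 hps)
  · rw [Set.indicator_of_notMem hps]
    refine le_antisymm ?_ zero_le
    calc μ s ≤ μ ({p}ᶜ) := measure_mono fun x hx hxp => hps (hxp ▸ hx)
      _ = 0 := hcompl
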